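/- Let 𝕀 = I-script_{i in I}(M_i) be a semi-direct product structure and let U = U_{i in I}(M_i) be the corresponding structure with unary predicates on the same domain. Suppose a-bar, b-bar are m-tuples from 𝕀 with the same complete quantifier-free type in the (L1 ∪ {E})-reduct 𝕀^red. Then: (i) gr(a-bar) = gr(b-bar) if and only if a-bar and b-bar have the same complete quantifier-free type in U; and (ii) gr(a-bar) is isomorphic to gr(b-bar) as L2-structures if and only if a-bar and b-bar have the same complete quantifier-free type in 𝕀. -/

import Mathlib

open FirstOrder FirstOrder.Language FirstOrder.Language.Structure CategoryTheory

namespace SRPaper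

/-- Two tuples from `M` have the same complete quantifier-free type:
they satisfy the same quantifier-free formulas. -/
def SameQfTp (L : Language) (M : Type*) [L.Structure M] {n : ℕ} (a b : Fin n → M) : Prop :=
  ∀ φ : L.Formula (Fin n), φ.IsQF → (φ.Realize a ↔ φ.Realize b)

/-- A map is quantifier-free-type-preserving if tuples with the same complete
quantifier-free type are sent to tuples with the same complete quantifier-free type. -/
def QfTpPreserving (LA : Language) (A : Type*) [LA.Structure A]
    (LB : Language) (B : Type*) [LB.Structure B] (h : A → B) : Prop :=
  ∀ (n : ℕ) (a b : Fin n → A), SameQfTp LA A a b → SameQfTp LB B (h ∘ a) (h ∘ b)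

/-- `g : A → B` and `f : B → A` witness that `A` is a semi-retraction of `B`. -/
def SemiRetractionWitness (LA : Language) (A : Type*) [LA.Structure A]
    (LB : Language) (B : Type*) [LB.Structure B] (g : A → B) (f : B → A) : Prop :=
  Function.Injective g ∧ Function.Injective f ∧
    QfTpPreserving LA A LB B g ∧ QfTpPreserving LB B LA A f ∧
    ∀ (n : ℕ) (φ : LA.Formula (Fin n)), φ.IsQF →
      ∀ s : Fin n → A, φ.Realize s → φ.Realize (f ∘ g ∘ s)

/-- `A` is a semi-retraction of `B`. -/
def IsSemiRetractionOf (LA : Language) (A : Type*) [LA.Structure A]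
    (LB : Language) (B : Type*) [LB.Structure B] : Prop :=
  ∃ (g : A → B) (f : B → A), SemiRetractionWitness LA A LB B g f

/-- The Ramsey property for a class of structures `K`: for all `A B ∈ K` and `k ≥ 1` there is
`C ∈ K` such that every `k`-coloring of substructures of `C` admits a copy `B'` of `B` in `C`
on which the color of copies of `A` is constant. -/
def RamseyClass (L : Language) (K : Set (Bundled L.Structure)) : Prop :=
  ∀ A B : Bundled L.Structure, A ∈ K → B ∈ K → ∀ k : ℕ, 1 ≤ k →
    ∃ C : Bundled L.Structure, C ∈ K ∧
      ∀ c : L.Substructure C → Fin k,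
        ∃ B' : L.Substructure C, Nonempty (B ≃[L] B') ∧
          ∀ A₁ A₂ : L.Substructure C, A₁ ≤ B' → A₂ ≤ B' →
            Nonempty (A ≃[L] A₁) → Nonempty (A ≃[L] A₂) → c A₁ = c A₂

/-- A countable structure has the Ramsey property if its age does. -/
def HasRP (L : Language) (M : Type*) [L.Structure M] : Prop :=
  RamseyClass L (L.age M)

/-- `(a i : i ∈ I)` is an `I`-indexed indiscernible set of `d`-tuples in `U`. -/
def IndexedIndiscernible (L' : Language) (I : Type*) [L'.Structure I]
    (L : Language) (U : Type*) [L.Structure U] (d : ℕ) (a : I → Fin d → U) : Prop :=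
  ∀ (n : ℕ) (ι κ : Fin n → I), SameQfTp L' I ι κ →
    ∀ φ : L.Formula (Fin n × Fin d),
      (φ.Realize fun p => a (ι p.1) p.2) ↔ (φ.Realize fun p => a (κ p.1) p.2)

/-- `Y` realizes the EM-type of `X`: any formula satisfied by all `X`-tuples whose index tuple
has a given complete quantifier-free type in `I` is satisfied by the corresponding `Y`-tuple. -/
def LocallyBased (L' : Language) (I : Type*) [L'.Structure I]
    (L : Language) (U : Type*) [L.Structure U] (d : ℕ) (X Y : I → Fin d → U) : Prop :=
  ∀ (n : ℕ) (φ : L.Formula (Fin n × Fin d)) (ι : Fin n → I),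
    (∀ κ : Fin n → I, SameQfTp L' I ι κ → φ.Realize fun p => X (κ p.1) p.2) →
    (φ.Realize fun p => Y (ι p.1) p.2)

/-- `U` realizes every finitely-satisfiable set of formulas in one free variable with
countably many parameters: "sufficient saturation" for countable index structures. -/
def AlephOneSaturated (L : Language) (U : Type*) [L.Structure U] : Prop :=
  ∀ (p : ℕ → U) (Φ : Set (L.Formula (ℕ ⊕ Fin 1))),
    (∀ Φ₀ : Finset (L.Formula (ℕ ⊕ Fin 1)), ↑Φ₀ ⊆ Φ →
      ∃ x : U, ∀ φ ∈ Φ₀, Formula.Realize φ (Sum.elim p fun _ => x)) →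
    ∃ x : U, ∀ φ ∈ Φ, Formula.Realize φ (Sum.elim p fun _ => x)

/-- `I`-indexed indiscernible sets have the modeling property: in any sufficiently saturated
structure `U`, any `I`-indexed set of same-length tuples admits an `I`-indexed indiscernible
set in `U` locally based on it. -/
def ModelingProperty (L' : Language) (I : Type*) [L'.Structure I] : Prop :=
  ∀ (L : FirstOrder.Language.{0, 0}) (U : Type) [L.Structure U], AlephOneSaturated L U →
    ∀ (d : ℕ) (X : I → Fin d → U),
      ∃ Y : I → Fin d → U,
        IndexedIndiscernible L' I L U d Y ∧ LocallyBased L' I L U d X Y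

end SRPaper

namespace SRPaper

/-! ### Disjoint unions and semi-direct product structures

An "ordered `L`-structure" is modelled as a type with an `L.Structure` instance (for the
relations other than `<`) together with a `LinearOrder` instance (interpreting `<`); its full
language is `L.sum Language.order`. -/

attribute [local instance] FirstOrder.Language.orderStructure

/-- Relation symbols `E`: a single binary symbol. -/
inductive EqSymb : ℕ → Type
  | E : EqSymb 2

/-- The language `{E}` with one binary relation. -/
def langE : Language := ⟨fun _ => Empty, EqSymb⟩

/-- Unary predicate symbols `P i` for `i : O`. -/
inductive PredSymb (O : Type) : ℕ → Type
  | P (i : O) : PredSymb O 1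

/-- The language `{P_i : i ∈ O}` of unary predicates. -/
def langP (O : Type) : Language := ⟨fun _ => Empty, PredSymb O⟩

/-- A single binary relation symbol (for graphs). -/
inductive GrSymb : ℕ → Type
  | adj : GrSymb 2

/-- The language of graphs: one binary relation. -/
def langGr : Language := ⟨fun _ => Empty, GrSymb⟩

instance : langGr.IsRelational := fun _ => inferInstanceAs (IsEmpty Empty)

section Constructions

variable (O : Type) [LinearOrder O]

/-- Interpretation of a relational language `L1` on the disjoint union `Σₗ i, M i`,
where each relation is computed fiberwise (and fails on tuples meeting several fibers). -/
def fiberStructure (L1 : Language) [L1.IsRelational] (M : O → Type)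
    [∀ i, L1.Structure (M i)] : L1.Structure (Σₗ i, M i) where
  funMap := fun f _ => isEmptyElim f
  RelMap := fun {n} r v =>
    ∃ (i : O) (w : Fin n → M i), (∀ k, v k = toLex ⟨i, w k⟩) ∧ Structure.RelMap r w

/-- Interpretation of a relational language `L2` on the disjoint union `Σₗ i, M i` via the
projection to the index structure `O`. -/
def projStructure (L2 : Language) [L2.IsRelational] [L2.Structure O] (M : O → Type) :
    L2.Structure (Σₗ i, M i) where
  funMap := fun f _ => isEmptyElim f
  RelMap := fun {n} r v => Structure.RelMap r fun k => (ofLex (v k)).1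

/-- Interpretation of `E` on `Σₗ i, M i`: the equivalence relation whose classes are the
fibers `M i`. -/
def eqClassStructure (M : O → Type) : langE.Structure (Σₗ i, M i) where
  funMap := fun f _ => Empty.elim f
  RelMap := fun {n} r v =>
    match n, r, v with
    | _, EqSymb.E, v => (ofLex (v 0)).1 = (ofLex (v 1)).1

/-- Interpretation of the predicates `P i` on `Σₗ i, M i`: `P i` names the fiber `M i`. -/
def predStructure (M : O → Type) : (langP O).Structure (Σₗ i, M i) where
  funMap := fun f _ => Empty.elim f
  RelMap := fun {n} r v =>
    match n, r, v with
    | _, PredSymb.P i, v => (ofLex (v 0)).1 = i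

/-- The language of `U_{i ∈ O}(M_i)`: the (common) language of the `M_i`, the order `<`,
and the unary predicates `P_i`. -/
def langU (L1 : Language) (O : Type) : Language := (L1.sum Language.order).sum (langP O)

/-- The structure `U_{i ∈ O}(M_i)` on the disjoint union `Σₗ i, M i`: relations of `L1` are
computed fiberwise, `<` is the lexicographic order (fibers are convex, ordered by `O`), and
`P i` names the fiber `M i`. -/
instance uStructure (L1 : Language) [L1.IsRelational] (M : O → Type)
    [∀ i, L1.Structure (M i)] [∀ i, LinearOrder (M i)] :
    (langU L1 O).Structure (Σₗ i, M i) :=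
  letI := fiberStructure O L1 M
  letI := predStructure O M
  inferInstanceAs (((L1.sum Language.order).sum (langP O)).Structure (Σₗ i, M i))

/-- The language `L1 ∪ {<} ∪ {E}` (the reduct language of a semi-direct product, and the
language of `O(M_i | i ∈ I)` when the index structure is a pure linear order). -/
def langRed (L1 : Language) : Language := (L1.sum Language.order).sum langE

/-- The `L1 ∪ {<} ∪ {E}`-structure on `Σₗ i, M i`: relations of `L1` fiberwise, `<` the
lexicographic order, `E` the equivalence relation whose classes are the fibers.  For a pure
linear order index this is the structure `O(M_i | i ∈ O)`. -/
instance redStructure (L1 : Language) [L1.IsRelational] (M : O → Type)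
    [∀ i, L1.Structure (M i)] [∀ i, LinearOrder (M i)] :
    (langRed L1).Structure (Σₗ i, M i) :=
  letI := fiberStructure O L1 M
  letI := eqClassStructure O M
  inferInstanceAs (((L1.sum Language.order).sum langE).Structure (Σₗ i, M i))

/-- The language `L2 ∪ L1 ∪ {E}` (with the shared order `<`) of a semi-direct product
structure. -/
def langSD (L1 L2 : Language) : Language := (langRed L1).sum L2

/-- The semi-direct product structure `𝕀 = I-script_{i ∈ I}(M_i)` on `Σₗ i, M i`:
relations of `L1` fiberwise, `<` the lexicographic order, `E` the fiber equivalence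
relation, and relations of `L2` computed from the index structure via the projection. -/
instance sdStructure (L2 : Language) [L2.IsRelational] [L2.Structure O]
    (L1 : Language) [L1.IsRelational] (M : O → Type)
    [∀ i, L1.Structure (M i)] [∀ i, LinearOrder (M i)] :
    (langSD L1 L2).Structure (Σₗ i, M i) :=
  letI := projStructure O L2 M
  inferInstanceAs (((langRed L1).sum L2).Structure (Σₗ i, M i))

end Constructions

/-- The underlying set of the "underlying graph" `gr(ā)` of a tuple from a semi-direct
product structure: the set of indices whose fiber meets the tuple. -/
def grSet {O : Type} {M : O → Type} {n : ℕ} (a : Fin n → (Σₗ i, M i)) : Set O :=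
  {t | ∃ k, (ofLex (a k)).1 = t}

/-- The full language of ordered graphs: one binary relation and the order. -/
def langOG : Language := langGr.sum Language.order

/-- A finite or countable `langOG`-structure is an ordered graph when the binary relation is
irreflexive and symmetric and the order symbol is interpreted as a linear order. -/
def IsOrderedGraph (N : Type*) [langOG.Structure N] : Prop :=
  (∀ x : N, ¬ Structure.RelMap (L := langOG) (Sum.inl GrSymb.adj) ![x, x]) ∧
  (∀ x y : N, Structure.RelMap (L := langOG) (Sum.inl GrSymb.adj) ![x, y] →
    Structure.RelMap (L := langOG) (Sum.inl GrSymb.adj) ![y, x]) ∧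
  IsLinearOrder N (fun a b =>
    Structure.RelMap (L := langOG) (Sum.inr Language.orderRel.le) ![a, b])

/-- A random ordered graph: a countable structure that is a Fraïssé limit of the class of
finite ordered graphs. -/
def IsRandomOrderedGraph (G : Type) [langGr.Structure G] [LinearOrder G] [Countable G] : Prop :=
  letI : langOG.Structure G := inferInstanceAs ((langGr.sum Language.order).Structure G)
  haveI : ∀ l, IsEmpty (langOG.Functions l) := fun _ => inferInstanceAs (IsEmpty (Empty ⊕ Empty))
  IsFraisseLimit {N : CategoryTheory.Bundled langOG.Structure | Finite N ∧ IsOrderedGraph N} G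

end SRPaper

namespace SRPaper

instance : langE.IsRelational := fun _ => inferInstanceAs (IsEmpty Empty)
instance (O : Type) : (langP O).IsRelational := fun _ => inferInstanceAs (IsEmpty Empty)

instance (L1 : Language) [L1.IsRelational] (O : Type) : (langU L1 O).IsRelational :=
  inferInstanceAs (((L1.sum Language.order).sum (langP O)).IsRelational)

instance (L1 : Language) [L1.IsRelational] : (langRed L1).IsRelational :=
  inferInstanceAs (((L1.sum Language.order).sum langE).IsRelational)

instance (L1 L2 : Language) [L1.IsRelational] [L2.IsRelational] : (langSD L1 L2).IsRelational :=
  inferInstanceAs (((langRed L1).sum L2).IsRelational)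

lemma term_eq_var {L : Language} [L.IsRelational] {α : Type*} (t : L.Term (α ⊕ Fin 0)) :
    ∃ k : α, t = Term.var (Sum.inl k) := by
  cases t with
  | var x =>
    rcases x with k | i
    · exact ⟨k, rfl⟩
    · exact i.elim0
  | func f _ => exact isEmptyElim f

lemma SameQfTp.relIff {L : Language} {M : Type*} [L.Structure M] {m : ℕ} {a b : Fin m → M}
    (h : SameQfTp L M a b) {n : ℕ} (R : L.Relations n) (v : Fin n → Fin m) :
    RelMap R (fun i => a (v i)) ↔ RelMap R (fun i => b (v i)) := by
  have := h (R.formula fun i => Term.var (v i))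
    ((BoundedFormula.IsAtomic.rel R _).isQF)
  simpa [Formula.realize_rel] using this

lemma SameQfTp.eqIff {L : Language} {M : Type*} [L.Structure M] {m : ℕ} {a b : Fin m → M}
    (h : SameQfTp L M a b) (k l : Fin m) : a k = a l ↔ b k = b l := by
  have := h (Term.equal (Term.var k) (Term.var l))
    ((BoundedFormula.IsAtomic.equal _ _).isQF)
  simpa [Formula.realize_equal] using this

lemma sameQfTp_of_atoms {L : Language} [L.IsRelational] {M : Type*} [L.Structure M] {m : ℕ}
    {a b : Fin m → M}
    (heq : ∀ k l : Fin m, a k = a l ↔ b k = b l)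
    (hrel : ∀ (n : ℕ) (R : L.Relations n) (v : Fin n → Fin m),
      (RelMap R (fun i => a (v i)) ↔ RelMap R (fun i => b (v i)))) :
    SameQfTp L M a b := by
  intro φ hφ
  induction hφ with
  | falsum => exact Iff.rfl
  | of_isAtomic h =>
    cases h with
    | equal t₁ t₂ =>
      obtain ⟨k, rfl⟩ := term_eq_var t₁
      obtain ⟨l, rfl⟩ := term_eq_var t₂
      simpa [Formula.Realize, BoundedFormula.Realize, Term.bdEqual, Term.realize] using heq k l
    | rel R ts =>
      choose v hv using fun i => term_eq_var (ts i)
      have hts : ts = fun i => Term.var (Sum.inl (v i)) := funext hv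
      subst hts
      simpa [Formula.Realize, Term.realize] using hrel _ R v
  | imp _ _ ih₁ ih₂ => exact imp_congr ih₁ ih₂

/-- If fibers strictly-compare the same way and ranges coincide, no coordinate can jump up. -/
lemma no_jump {I : Type} [LinearOrder I] {m : ℕ} {p q : Fin m → I}
    (hlt : ∀ k l, p k < p l ↔ q k < q l)
    (hr : Set.range p = Set.range q) : ∀ k, ¬ p k < q k := by
  by_contra h
  push_neg at h
  obtain ⟨k0, hk0⟩ := h
  obtain ⟨k, hk, hmax⟩ := Finset.exists_max_image
    (Finset.univ.filter fun k => p k < q k) q ⟨k0, by simpa using hk0⟩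
  simp only [Finset.mem_filter] at hk
  obtain ⟨l, hl⟩ : q k ∈ Set.range p := hr ▸ Set.mem_range_self k
  have h1 : p k < p l := by rw [hl]; exact hk.2
  have h2 : q k < q l := (hlt k l).1 h1
  have h3 : p l < q l := by rw [hl]; exact h2
  have := hmax l (Finset.mem_filter.2 ⟨Finset.mem_univ l, h3⟩)
  exact absurd h2 (not_lt.2 this)

end SRPaper

attribute [local instance] FirstOrder.Language.orderStructure

open SRPaper in
/-- For `m`-tuples `a`, `b` from the semi-direct product `𝕀 = 𝓘_{i∈I}(M_i)`
with the same complete quantifier-free type in the `L1 ∪ {E}`-reduct `𝕀^red`: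
(i) `gr(a) = gr(b)` iff `a` and `b` have the same complete quantifier-free type in
`U_{i∈I}(M_i)`; and (ii) `gr(a) ≅ gr(b)` (as ordered `L2`-structures) iff `a` and `b` have
the same complete quantifier-free type in `𝕀`. -/
theorem statement12 (I : Type) [LinearOrder I] [Countable I]
    (L2 : Language) [L2.IsRelational] [L2.Structure I]
    (L1 : Language) [L1.IsRelational] (M : I → Type)
    [∀ i, L1.Structure (M i)] [∀ i, LinearOrder (M i)] [∀ i, Countable (M i)]
    (K : Set (CategoryTheory.Bundled (L1.sum Language.order).Structure))
    (hK : ∀ i, (L1.sum Language.order).age (M i) = K)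
    (m : ℕ) (a b : Fin m → (Σₗ i, M i))
    (hred : SameQfTp (langRed L1) (Σₗ i, M i) a b) :
    (grSet a = grSet b ↔ SameQfTp (langU L1 I) (Σₗ i, M i) a b) ∧
      (Nonempty
          ((Substructure.closure (L2.sum Language.order) (grSet a)) ≃[L2.sum Language.order]
            (Substructure.closure (L2.sum Language.order) (grSet b))) ↔
        SameQfTp (langSD L1 L2) (Σₗ i, M i) a b) := by
  classical
  -- basic atomic facts from the reduct type equality
  have hle : ∀ k l, a k ≤ a l ↔ b k ≤ b l := by
    intro k l
    have h := hred.relIff (Sum.inl (Sum.inr Language.orderRel.le)) ![k, l]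
    exact h
  have hE : ∀ k l, (ofLex (a k)).1 = (ofLex (a l)).1 ↔ (ofLex (b k)).1 = (ofLex (b l)).1 := by
    intro k l
    have h := hred.relIff (Sum.inr EqSymb.E) ![k, l]
    exact h
  have heqel : ∀ k l, a k = a l ↔ b k = b l := by
    intro k l
    rw [le_antisymm_iff, le_antisymm_iff, hle k l, hle l k]
  have key : ∀ x y : Σₗ i, M i,
      (ofLex x).1 < (ofLex y).1 ↔ (x ≤ y ∧ ¬ (ofLex x).1 = (ofLex y).1) := by
    intro x y
    constructor
    · intro h
      exact ⟨Sigma.Lex.le_def.2 (Or.inl h), ne_of_lt h⟩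
    · rintro ⟨hxy, hne⟩
      rcases Sigma.Lex.le_def.1 hxy with h | ⟨h, -⟩
      · exact h
      · exact absurd h hne
  have hlt : ∀ k l, (ofLex (a k)).1 < (ofLex (a l)).1 ↔ (ofLex (b k)).1 < (ofLex (b l)).1 := by
    intro k l
    rw [key, key]
    exact and_congr (hle k l) (not_congr (hE k l))
  have hple : ∀ k l, (ofLex (a k)).1 ≤ (ofLex (a l)).1 ↔ (ofLex (b k)).1 ≤ (ofLex (b l)).1 := by
    intro k l
    rw [le_iff_lt_or_eq, le_iff_lt_or_eq]
    exact or_congr (hlt k l) (hE k l)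
  have hgr_a : grSet a = Set.range (fun k => (ofLex (a k)).1) := rfl
  have hgr_b : grSet b = Set.range (fun k => (ofLex (b k)).1) := rfl
  -- Part (i)
  have parti : grSet a = grSet b ↔ SameQfTp (langU L1 I) (Σₗ i, M i) a b := by
    constructor
    · intro hgr
      have hr : Set.range (fun k => (ofLex (a k)).1) = Set.range (fun k => (ofLex (b k)).1) :=
        hgr_a ▸ hgr_b ▸ hgr
      have h1 := no_jump hlt hr
      have h2 := no_jump (fun k l => (hlt k l).symm) hr.symm
      have hfib : ∀ k, (ofLex (a k)).1 = (ofLex (b k)).1 := fun k =>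
        le_antisymm (not_lt.1 (h2 k)) (not_lt.1 (h1 k))
      refine sameQfTp_of_atoms heqel ?_
      rintro n ((r | r) | r) v
      · exact hred.relIff (Sum.inl (Sum.inl r)) v
      · cases r with
        | le => exact hle (v 0) (v 1)
      · cases r with
        | P i =>
          show (ofLex (a (v 0))).1 = i ↔ (ofLex (b (v 0))).1 = i
          rw [hfib (v 0)]
    · intro hU
      have hfib : ∀ k, (ofLex (b k)).1 = (ofLex (a k)).1 := by
        intro k
        have h := hU.relIff (Sum.inr (PredSymb.P ((ofLex (a k)).1))) ![k]
        exact h.1 rfl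
      ext t
      constructor
      · rintro ⟨k, rfl⟩
        exact ⟨k, hfib k⟩
      · rintro ⟨k, rfl⟩
        exact ⟨k, (hfib k).symm⟩
  refine ⟨parti, ?_⟩
  -- Part (ii)
  set Lo := L2.sum Language.order with hLo
  have memA : ∀ x : I, x ∈ Substructure.closure Lo (grSet a) ↔ ∃ k, (ofLex (a k)).1 = x :=
    fun x => Substructure.mem_closure_iff_of_isRelational Lo (grSet a) x
  have memB : ∀ x : I, x ∈ Substructure.closure Lo (grSet b) ↔ ∃ k, (ofLex (b k)).1 = x :=
    fun x => Substructure.mem_closure_iff_of_isRelational Lo (grSet b) x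
  have hmemA : ∀ k, (ofLex (a k)).1 ∈ Substructure.closure Lo (grSet a) :=
    fun k => (memA _).2 ⟨k, rfl⟩
  have hmemB : ∀ k, (ofLex (b k)).1 ∈ Substructure.closure Lo (grSet b) :=
    fun k => (memB _).2 ⟨k, rfl⟩
  have exA : ∀ x : ↥(Substructure.closure Lo (grSet a)), ∃ k, (ofLex (a k)).1 = (x : I) :=
    fun x => (memA _).1 x.2
  have exB : ∀ y : ↥(Substructure.closure Lo (grSet b)), ∃ k, (ofLex (b k)).1 = (y : I) :=
    fun y => (memB _).1 y.2
  let f : ↥(Substructure.closure Lo (grSet a)) → ↥(Substructure.closure Lo (grSet b)) :=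
    fun x => ⟨(ofLex (b (exA x).choose)).1, hmemB _⟩
  let g : ↥(Substructure.closure Lo (grSet b)) → ↥(Substructure.closure Lo (grSet a)) :=
    fun y => ⟨(ofLex (a (exB y).choose)).1, hmemA _⟩
  have hf : ∀ (x : ↥(Substructure.closure Lo (grSet a))) (k : Fin m),
      (ofLex (a k)).1 = (x : I) → ((f x : I)) = (ofLex (b k)).1 := by
    intro x k hk
    have h1 := (exA x).choose_spec
    have h2 : (ofLex (a (exA x).choose)).1 = (ofLex (a k)).1 := by rw [h1, hk]
    exact (hE _ _).1 h2
  have hg : ∀ (y : ↥(Substructure.closure Lo (grSet b))) (k : Fin m),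
      (ofLex (b k)).1 = (y : I) → ((g y : I)) = (ofLex (a k)).1 := by
    intro y k hk
    have h1 := (exB y).choose_spec
    have h2 : (ofLex (b (exB y).choose)).1 = (ofLex (b k)).1 := by rw [h1, hk]
    exact (hE _ _).2 h2
  have hgf : ∀ x, g (f x) = x := by
    intro x
    obtain ⟨k, hk⟩ := exA x
    have h1 : ((f x : I)) = (ofLex (b k)).1 := hf x k hk
    have h2 : ((g (f x) : I)) = (ofLex (a k)).1 := hg (f x) k h1.symm
    exact Subtype.ext (by rw [h2, hk])
  have hfg : ∀ y, f (g y) = y := by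
    intro y
    obtain ⟨k, hk⟩ := exB y
    have h1 : ((g y : I)) = (ofLex (a k)).1 := hg y k hk
    have h2 : ((f (g y) : I)) = (ofLex (b k)).1 := hf (g y) k h1.symm
    exact Subtype.ext (by rw [h2, hk])
  have hfle : ∀ x y : ↥(Substructure.closure Lo (grSet a)),
      (x : I) ≤ (y : I) ↔ (f x : I) ≤ (f y : I) := by
    intro x y
    obtain ⟨k, hk⟩ := exA x
    obtain ⟨l, hl⟩ := exA y
    rw [← hk, ← hl, hf x k hk, hf y l hl]
    exact hple k l
  have hfinA : Finite ↥(Substructure.closure Lo (grSet a)) := by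
    have hset : (Substructure.closure Lo (grSet a) : Set I) = grSet a := by
      ext x
      exact memA x
    have : (Substructure.closure Lo (grSet a) : Set I).Finite := by
      rw [hset, hgr_a]
      exact Set.finite_range _
    exact this.to_subtype
  constructor
  · rintro ⟨F⟩
    -- F must agree with f
    have hfinj : Function.Injective f := Function.LeftInverse.injective hgf
    have hfsurj : Function.Surjective f := Function.RightInverse.surjective hfg
    have fsm : StrictMono f := by
      intro x y hxy
      rw [← Subtype.coe_lt_coe, lt_iff_le_and_ne]
      refine ⟨(hfle x y).1 (le_of_lt (Subtype.coe_lt_coe.2 hxy)), ?_⟩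
      intro hc
      exact absurd (hfinj (Subtype.ext hc)) (ne_of_lt hxy)
    have hFle : ∀ x y : ↥(Substructure.closure Lo (grSet a)),
        (x : I) ≤ (y : I) ↔ (F x : I) ≤ (F y : I) := by
      intro x y
      exact (F.map_rel' (Sum.inr Language.orderRel.le) ![x, y]).symm
    have Fsm : StrictMono (F : ↥(Substructure.closure Lo (grSet a)) →
        ↥(Substructure.closure Lo (grSet b))) := by
      intro x y hxy
      rw [← Subtype.coe_lt_coe, lt_iff_le_and_ne]
      refine ⟨(hFle x y).1 (le_of_lt (Subtype.coe_lt_coe.2 hxy)), ?_⟩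
      intro hc
      exact absurd (F.toEquiv.injective (Subtype.ext hc)) (ne_of_lt hxy)
    have hFf : (F : ↥(Substructure.closure Lo (grSet a)) →
        ↥(Substructure.closure Lo (grSet b))) = f := by
      haveI : WellFoundedLT ↥(Substructure.closure Lo (grSet a)) := Finite.to_wellFoundedLT
      refine (Fsm.range_inj fsm).1 ?_
      ext y
      simp only [Set.mem_range]
      exact ⟨fun _ => hfsurj y, fun _ => F.toEquiv.surjective y⟩
    refine sameQfTp_of_atoms heqel ?_
    rintro n (r | R) v
    · exact hred.relIff r v
    · -- L2 relations, via the projection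
      let x : Fin n → ↥(Substructure.closure Lo (grSet a)) :=
        fun i => ⟨(ofLex (a (v i))).1, hmemA (v i)⟩
      have e1 : (fun i => ((F (x i)) : I)) = fun i => (ofLex (b (v i))).1 := by
        funext i
        rw [hFf]
        exact hf (x i) (v i) rfl
      show RelMap R (fun i => (ofLex (a (v i))).1) ↔ RelMap R (fun i => (ofLex (b (v i))).1)
      rw [← e1]
      exact (F.map_rel' (Sum.inl R) x).symm
  · intro hS
    have hL2 : ∀ (n : ℕ) (R : L2.Relations n) (v : Fin n → Fin m),
        RelMap R (fun i => (ofLex (a (v i))).1) ↔ RelMap R (fun i => (ofLex (b (v i))).1) :=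
      fun n R v => hS.relIff (Sum.inr R) v
    refine ⟨⟨⟨f, g, hgf, hfg⟩, fun {n} F _ => isEmptyElim F, ?_⟩⟩
    rintro n (R | r) x
    · choose ks hks using fun i => exA (x i)
      have e1 : (fun i => ((f (x i)) : I)) = fun i => (ofLex (b (ks i))).1 :=
        funext fun i => hf (x i) (ks i) (hks i)
      have e2 : (fun i => ((x i) : I)) = fun i => (ofLex (a (ks i))).1 :=
        funext fun i => (hks i).symm
      show RelMap R (fun i => ((f (x i)) : I)) ↔ RelMap R (fun i => ((x i) : I))
      rw [e1, e2]
      exact (hL2 n R ks).symm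
    · cases r with
      | le => exact (hfle (x 0) (x 1)).symm
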